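/- Let K be a field of characteristic zero and let p, q ∈ K[Y] with q ≠ 0. If p(Y + c)·q(Y) = p(Y)·q(Y + c) for every c ∈ K, then there exists a ∈ K with p = a·q. (Step in the proof of Lemma D.7: the identity F_i(X,Y+l)·F_n(X,Y) = F_i(X,Y)·F_n(X,Y+l) for all l forces F_i = c(X)·F_n.) -/

import Mathlib

/-- Step in the proof of Lemma D.7: if `p(Y+c)·q(Y) = p(Y)·q(Y+c)` for every `c` in a
field of characteristic zero and `q ≠ 0`, then `p` is a constant multiple of `q`. -/
theorem shift_identity_proportional (K : Type*) [Field K] [CharZero K]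
    (p q : Polynomial K) (hq : q ≠ 0)
    (h : ∀ c : K, p.comp (Polynomial.X + Polynomial.C c) * q
        = p * q.comp (Polynomial.X + Polynomial.C c)) :
    ∃ a : K, p = Polynomial.C a * q := by
  have key : ∀ x y : K, p.eval x * q.eval y = p.eval y * q.eval x := by
    intro x y
    have := congrArg (Polynomial.eval y) (h (x - y))
    simpa [Polynomial.eval_comp] using this
  obtain ⟨y, hy⟩ : ∃ y, q.eval y ≠ 0 := by
    by_contra hc
    push_neg at hc
    exact hq (Polynomial.funext (by simpa using hc))
  refine ⟨p.eval y / q.eval y, Polynomial.funext fun x => ?_⟩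
  have := key x y
  rw [Polynomial.eval_mul, Polynomial.eval_C, div_mul_eq_mul_div, eq_div_iff hy]
  linear_combination this
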